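/- Let U be a nonempty bounded connected open subset of ℂ. Then there exists a holomorphic function ρ : U → ℂ with ρ(U) ⊆ Δ = {z ∈ ℂ : |z| < 1} such that ρ(U) is dense in Δ. -/

import Mathlib

open Complex Metric Set Filter Topology

noncomputable section
namespace DIBD


/-- affine map with positive real part on `U` -/
def q (b z : ℂ) : ℂ := (starRingEnd ℂ) b * (b - z)

/-- the basic bump -/
def uf (b : ℂ) (T : ℝ) (z : ℂ) : ℂ := (1 + T * q b z)⁻¹

lemma D_re (b : ℂ) {T : ℝ} (hT : 0 ≤ T) {z : ℂ} (hz : 0 < (q b z).re) :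
    1 ≤ (1 + (T : ℂ) * q b z).re := by
  simp only [Complex.add_re, Complex.one_re, Complex.mul_re, Complex.ofReal_re,
    Complex.ofReal_im, zero_mul, sub_zero]
  nlinarith

lemma D_norm (b : ℂ) {T : ℝ} (hT : 0 ≤ T) {z : ℂ} (hz : 0 < (q b z).re) :
    1 ≤ ‖1 + (T : ℂ) * q b z‖ :=
  le_trans (D_re b hT hz) (le_trans (Complex.re_le_norm _) (le_of_eq rfl))

lemma D_ne (b : ℂ) {T : ℝ} (hT : 0 ≤ T) {z : ℂ} (hz : 0 < (q b z).re) :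
    (1 + (T : ℂ) * q b z) ≠ 0 := by
  intro h
  have := D_norm b hT hz
  rw [h] at this; simp at this; linarith

lemma uf_norm_le_one (b : ℂ) {T : ℝ} (hT : 0 ≤ T) {z : ℂ} (hz : 0 < (q b z).re) :
    ‖uf b T z‖ ≤ 1 := by
  rw [uf, norm_inv]
  rw [inv_le_one_iff₀]
  right; exact D_norm b hT hz

lemma uf_sq_le_re (b : ℂ) {T : ℝ} (hT : 0 ≤ T) {z : ℂ} (hz : 0 < (q b z).re) :
    ‖uf b T z‖ ^ 2 ≤ (uf b T z).re := by
  set D := 1 + (T : ℂ) * q b z with hD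
  have h1 : 1 ≤ D.re := D_re b hT hz
  have hne : D ≠ 0 := D_ne b hT hz
  have hsq : 0 < Complex.normSq D := Complex.normSq_pos.2 hne
  rw [uf, ← hD, Complex.inv_re]
  have h2 : ‖D⁻¹‖ ^ 2 = (Complex.normSq D)⁻¹ := by
    rw [Complex.sq_norm, map_inv₀]
  rw [h2, div_eq_mul_inv]
  nlinarith [inv_nonneg.2 hsq.le]


-- algebra: the key combination bound
lemma norm_one_sub_sq (u : ℂ) (hu : ‖u‖ ^ 2 ≤ u.re) : ‖1 - u‖ ^ 2 ≤ 1 - ‖u‖ ^ 2 := by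
  have h1 : ‖1 - u‖ ^ 2 = 1 - 2 * u.re + ‖u‖ ^ 2 := by
    rw [Complex.sq_norm, Complex.sq_norm,
      Complex.normSq_apply, Complex.normSq_apply]
    simp [Complex.sub_re, Complex.sub_im]
    ring
  rw [h1]; nlinarith

lemma combo_bound (a w u : ℂ) (ha : ‖a‖ ≤ 1) (hw : ‖w‖ ≤ 1) (hu : ‖u‖ ^ 2 ≤ u.re) :
    ‖a * (1 - u) ^ 2 + w * u ^ 2‖ ≤ 1 := by
  have h1 : ‖1 - u‖ ^ 2 ≤ 1 - ‖u‖ ^ 2 := norm_one_sub_sq u hu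
  have ha' : 0 ≤ ‖a‖ := norm_nonneg _
  calc ‖a * (1 - u) ^ 2 + w * u ^ 2‖ ≤ ‖a * (1 - u) ^ 2‖ + ‖w * u ^ 2‖ := norm_add_le _ _
    _ = ‖a‖ * ‖1 - u‖ ^ 2 + ‖w‖ * ‖u‖ ^ 2 := by rw [norm_mul, norm_mul, norm_pow, norm_pow]
    _ ≤ 1 := by
        have g1 : ‖a‖ * ‖1 - u‖ ^ 2 ≤ ‖1 - u‖ ^ 2 := by nlinarith [sq_nonneg ‖1 - u‖]
        have g2 : ‖w‖ * ‖u‖ ^ 2 ≤ ‖u‖ ^ 2 := by nlinarith [sq_nonneg ‖u‖, norm_nonneg w]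
        nlinarith

lemma step_diff_bound (a w u : ℂ) (ha : ‖a‖ ≤ 1) (hw : ‖w‖ ≤ 1) (hu : ‖u‖ ≤ 1) :
    ‖(a * (1 - u) ^ 2 + w * u ^ 2) - a‖ ≤ 4 * ‖u‖ := by
  have : (a * (1 - u) ^ 2 + w * u ^ 2) - a = a * (u * u - 2 * u) + w * (u * u) := by ring
  rw [this]
  calc ‖a * (u * u - 2 * u) + w * (u * u)‖
      ≤ ‖a‖ * ‖u * u - 2 * u‖ + ‖w‖ * ‖u * u‖ := by
        refine le_trans (norm_add_le _ _) ?_; rw [norm_mul, norm_mul]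
    _ ≤ 1 * (‖u‖ * ‖u‖ + 2 * ‖u‖) + 1 * (‖u‖ * ‖u‖) := by
        gcongr
        · refine le_trans (norm_sub_le _ _) ?_
          rw [norm_mul]; simp [norm_mul]
        · rw [norm_mul]
    _ ≤ 4 * ‖u‖ := by nlinarith [norm_nonneg u]

lemma point_bound (a w u : ℂ) (ha : ‖a‖ ≤ 1) (hw : ‖w‖ ≤ 1) (hu : ‖u‖ ≤ 1) :
    ‖(a * (1 - u) ^ 2 + w * u ^ 2) - w‖ ≤ 4 * ‖1 - u‖ := by
  have : (a * (1 - u) ^ 2 + w * u ^ 2) - w = a * (1 - u) ^ 2 - w * ((1 - u) * (1 + u)) := by ring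
  rw [this]
  have h1u : ‖1 + u‖ ≤ 2 := by
    refine le_trans (norm_add_le _ _) ?_; rw [norm_one]; linarith
  calc ‖a * (1 - u) ^ 2 - w * ((1 - u) * (1 + u))‖
      ≤ ‖a‖ * ‖1 - u‖ ^ 2 + ‖w‖ * (‖1 - u‖ * ‖1 + u‖) := by
        refine le_trans (norm_sub_le _ _) ?_
        rw [norm_mul, norm_mul, norm_pow, norm_mul]
    _ ≤ 1 * ‖1 - u‖ ^ 2 + 1 * (‖1 - u‖ * 2) := by gcongr
    _ ≤ 4 * ‖1 - u‖ := by
        have h2 : ‖1 - u‖ ≤ 2 := by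
          refine le_trans (norm_sub_le _ _) ?_; rw [norm_one]; linarith
        nlinarith [norm_nonneg (1 - u)]


lemma q_cont (b : ℂ) : Continuous (fun z => (q b z).re) := by
  unfold q; fun_prop

lemma uf_diffOn {U : Set ℂ} {b : ℂ} (hbq : ∀ z ∈ U, 0 < (q b z).re) {T : ℝ} (hT : 0 ≤ T) :
    DifferentiableOn ℂ (uf b T) U := by
  unfold uf
  apply DifferentiableOn.inv
  · unfold q; fun_prop
  · intro z hz
    intro h
    have h1 : 1 ≤ (1 + (T : ℂ) * q b z).re := by
      simp only [Complex.add_re, Complex.one_re, Complex.mul_re, Complex.ofReal_re,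
        Complex.ofReal_im, zero_mul, sub_zero]
      nlinarith [hbq z hz]
    rw [h] at h1; simp at h1; linarith

def KK (U : Set ℂ) (n : ℕ) : Set ℂ := {z | ‖z‖ ≤ n ∧ 1 / (n + 1) ≤ Metric.infDist z Uᶜ}

lemma KK_subset (U : Set ℂ) (n : ℕ) : KK U n ⊆ U := by
  intro z hz
  by_contra h
  have h0 : Metric.infDist z Uᶜ = 0 := Metric.infDist_zero_of_mem h
  have := hz.2
  rw [h0] at this
  have : (0:ℝ) < 1 / (n + 1) := by positivity
  linarith [hz.2, h0 ▸ hz.2]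

lemma isCompact_KK (U : Set ℂ) (n : ℕ) : IsCompact (KK U n) := by
  apply Metric.isCompact_of_isClosed_isBounded
  · exact (isClosed_le continuous_norm continuous_const).inter
      (isClosed_le continuous_const (Metric.continuous_infDist_pt _))
  · apply Bornology.IsBounded.subset (Metric.isBounded_closedBall (x := (0:ℂ)) (r := n))
    intro z hz
    simpa [Metric.mem_closedBall, dist_zero_right] using hz.1

lemma KK_mono (U : Set ℂ) {n m : ℕ} (h : n ≤ m) : KK U n ⊆ KK U m := by
  intro z hz
  refine ⟨le_trans hz.1 (by exact_mod_cast Nat.cast_le.2 h), le_trans ?_ hz.2⟩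
  apply one_div_le_one_div_of_le
  · positivity
  · have : (n:ℝ) ≤ m := by exact_mod_cast h
    linarith

lemma exists_KK_nhds {U : Set ℂ} (hU_open : IsOpen U) (hUc : Uᶜ.Nonempty) {z : ℂ}
    (hz : z ∈ U) : ∃ N : ℕ, KK U N ∈ 𝓝 z ∧ ∀ n, N ≤ n → z ∈ KK U n := by
  set δ := Metric.infDist z Uᶜ with hδ
  have hδpos : 0 < δ := by
    obtain ⟨ε, hε, hball⟩ := Metric.isOpen_iff.1 hU_open z hz
    by_contra h
    push_neg at h
    have : Metric.infDist z Uᶜ < ε := lt_of_le_of_lt h hε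
    obtain ⟨y, hy, hdy⟩ := (Metric.infDist_lt_iff hUc).1 this
    exact hy (hball (by rwa [Metric.mem_ball, dist_comm]))
  obtain ⟨N, hN⟩ := exists_nat_ge (max (‖z‖ + δ / 2) (2 / δ))
  have hN1 : ‖z‖ + δ / 2 ≤ N := le_trans (le_max_left _ _) hN
  have hN2 : 2 / δ ≤ N := le_trans (le_max_right _ _) hN
  have hN3 : 1 / ((N:ℝ) + 1) ≤ δ / 2 := by
    rw [div_le_div_iff₀ (by positivity) (by norm_num)]
    have : 2 / δ ≤ (N:ℝ) + 1 := by linarith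
    calc (1:ℝ) * 2 = 2 := by ring
      _ = (2 / δ) * δ := by field_simp
      _ ≤ ((N:ℝ) + 1) * δ := by
          apply mul_le_mul_of_nonneg_right this hδpos.le
      _ = δ * ((N:ℝ) + 1) := by ring
  refine ⟨N, ?_, ?_⟩
  · rw [Metric.mem_nhds_iff]
    refine ⟨δ / 2, by positivity, ?_⟩
    intro w hw
    rw [Metric.mem_ball] at hw
    constructor
    · calc ‖w‖ ≤ ‖z‖ + dist w z := by
            rw [dist_eq_norm]
            calc ‖w‖ = ‖z + (w - z)‖ := by ring_nf
              _ ≤ ‖z‖ + ‖w - z‖ := norm_add_le _ _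
        _ ≤ ‖z‖ + δ / 2 := by linarith
        _ ≤ N := hN1
    · have h1 : Metric.infDist z Uᶜ ≤ Metric.infDist w Uᶜ + dist z w :=
        Metric.infDist_le_infDist_add_dist
      rw [dist_comm] at h1
      have : δ / 2 ≤ Metric.infDist w Uᶜ := by linarith
      linarith [hN3]
  · intro n hn
    refine ⟨?_, ?_⟩
    · have : (N:ℝ) ≤ n := by exact_mod_cast hn
      linarith
    · have h4 : 1 / ((n:ℝ) + 1) ≤ 1 / ((N:ℝ) + 1) := by
        apply one_div_le_one_div_of_le (by positivity)
        have : (N:ℝ) ≤ n := by exact_mod_cast hn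
        linarith
      have : δ / 2 ≤ δ := by linarith
      calc 1 / ((n:ℝ) + 1) ≤ δ / 2 := le_trans h4 hN3
        _ ≤ δ := this


lemma D_re' {b : ℂ} {T : ℝ} (hT : 0 ≤ T) {z : ℂ} (hz : 0 < (q b z).re) :
    1 ≤ (1 + (T : ℂ) * q b z).re := by
  simp only [Complex.add_re, Complex.one_re, Complex.mul_re, Complex.ofReal_re,
    Complex.ofReal_im, zero_mul, sub_zero]
  nlinarith

lemma D_norm' {b : ℂ} {T : ℝ} (hT : 0 ≤ T) {z : ℂ} (hz : 0 < (q b z).re) :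
    1 ≤ ‖1 + (T : ℂ) * q b z‖ :=
  le_trans (D_re' hT hz) (le_trans (Complex.re_le_norm _) (le_of_eq rfl))

lemma uf_norm_le_one' {b : ℂ} {T : ℝ} (hT : 0 ≤ T) {z : ℂ} (hz : 0 < (q b z).re) :
    ‖uf b T z‖ ≤ 1 := by
  rw [uf, norm_inv, inv_le_one_iff₀]; right; exact D_norm' hT hz

/-- property of the chosen pair (T, z*) at a given step -/
def SPprop (U : Set ℂ) (b : ℂ) (S : Set ℂ) (ε : ℝ) (p : ℝ × ℂ) : Prop :=
  0 ≤ p.1 ∧ (∀ z ∈ S, ‖uf b p.1 z‖ ≤ ε) ∧ p.2 ∈ U ∧ ‖uf b p.1 p.2 - 1‖ ≤ ε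

lemma near_pt {U : Set ℂ} {b : ℂ} (hbq : ∀ z ∈ U, 0 < (q b z).re) (hbcl : b ∈ closure U)
    (hb0 : b ≠ 0) {T : ℝ} (hT : 0 < T) {ε : ℝ} (hε : 0 < ε) :
    ∃ z ∈ U, ‖uf b T z - 1‖ ≤ ε := by
  have hb : 0 < ‖b‖ := norm_pos_iff.2 hb0
  obtain ⟨y, hy, hdy⟩ := Metric.mem_closure_iff.1 hbcl (ε / (T * ‖b‖)) (by positivity)
  refine ⟨y, hy, ?_⟩
  have hq : ‖q b y‖ = ‖b‖ * ‖b - y‖ := by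
    rw [q, norm_mul, RCLike.norm_conj]
  have hqy : ‖q b y‖ ≤ ε / T := by
    rw [hq]
    rw [dist_eq_norm] at hdy
    calc ‖b‖ * ‖b - y‖ ≤ ‖b‖ * (ε / (T * ‖b‖)) := by
          apply mul_le_mul_of_nonneg_left hdy.le hb.le
      _ = ε / T := by
          rw [eq_div_iff (ne_of_gt hT)]
          field_simp [ne_of_gt hb]
  have key : uf b T y - 1 = -(uf b T y * ((T:ℂ) * q b y)) := by
    rw [uf]
    have hne : (1 + (T:ℂ) * q b y) ≠ 0 := by
      intro h
      have h1 := D_re' hT.le (hbq y hy)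
      rw [h] at h1; simp at h1; linarith
    field_simp
    ring
  rw [key, norm_neg, norm_mul]
  calc ‖uf b T y‖ * ‖(T:ℂ) * q b y‖ ≤ 1 * ‖(T:ℂ) * q b y‖ := by
        apply mul_le_mul_of_nonneg_right (uf_norm_le_one' hT.le (hbq y hy)) (norm_nonneg _)
    _ = T * ‖q b y‖ := by
        rw [one_mul, norm_mul, Complex.norm_real, Real.norm_eq_abs, abs_of_pos hT]
    _ ≤ T * (ε / T) := by apply mul_le_mul_of_nonneg_left hqy hT.le
    _ = ε := by field_simp

lemma exists_SPprop {U : Set ℂ} {b : ℂ} (hbq : ∀ z ∈ U, 0 < (q b z).re)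
    (hbcl : b ∈ closure U) (hb0 : b ≠ 0) {S : Set ℂ} (hS : IsCompact S) (hSU : S ⊆ U)
    {ε : ℝ} (hε : 0 < ε) : ∃ p, SPprop U b S ε p := by
  rcases S.eq_empty_or_nonempty with hSe | hSne
  · obtain ⟨z, hz, hz'⟩ := near_pt hbq hbcl hb0 (T := 1) one_pos hε
    exact ⟨(1, z), by norm_num, by simp [hSe], hz, hz'⟩
  · have hqcont : ContinuousOn (fun z => (q b z).re) S := by
      apply Continuous.continuousOn; unfold q; fun_prop
    obtain ⟨z₁, hz₁S, hz₁min⟩ := hS.exists_isMinOn hSne hqcont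
    set m := (q b z₁).re with hm
    have hmpos : 0 < m := hbq z₁ (hSU hz₁S)
    set T := (ε * m)⁻¹ with hT
    have hTpos : 0 < T := by positivity
    obtain ⟨z, hz, hz'⟩ := near_pt hbq hbcl hb0 hTpos hε
    refine ⟨(T, z), hTpos.le, ?_, hz, hz'⟩
    intro w hw
    have hw' : 0 < (q b w).re := hbq w (hSU hw)
    have hmw : m ≤ (q b w).re := hz₁min hw
    have hD : T * m ≤ (1 + (T:ℂ) * q b w).re := by
      simp only [Complex.add_re, Complex.one_re, Complex.mul_re, Complex.ofReal_re,
        Complex.ofReal_im, zero_mul, sub_zero]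
      nlinarith
    have hDnorm : T * m ≤ ‖1 + (T:ℂ) * q b w‖ :=
      le_trans hD (le_trans (Complex.re_le_norm _) (le_of_eq rfl))
    have hTm : 0 < T * m := by positivity
    rw [uf, norm_inv]
    rw [inv_le_comm₀ (lt_of_lt_of_le hTm hDnorm) hε]
    calc ε⁻¹ = T * m := by rw [hT]; field_simp
      _ ≤ ‖1 + (T:ℂ) * q b w‖ := hDnorm
  -- done

open Classical in
def SP (U : Set ℂ) (b : ℂ) (S : Set ℂ) (ε : ℝ) : ℝ × ℂ :=
  if h : ∃ p, SPprop U b S ε p then h.choose else (0, 0)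

lemma SP_spec {U : Set ℂ} {b : ℂ} {S : Set ℂ} {ε : ℝ} (h : ∃ p, SPprop U b S ε p) :
    SPprop U b S ε (SP U b S ε) := by
  rw [SP, dif_pos h]; exact h.choose_spec

/-! ### the recursive construction -/

def st (U : Set ℂ) (b : ℂ) (v : ℕ → ℂ) : ℕ → (ℂ → ℂ) × (ℕ → ℂ)
  | 0 => (fun _ => 0, fun _ => b)
  | n + 1 =>
    (fun z => (st U b v n).1 z *
        (1 - uf b (SP U b (KK U (n + 1) ∪ (st U b v n).2 '' Set.Icc 1 n) ((1/2 : ℝ) ^ (n+1))).1 z) ^ 2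
      + v (Nat.unpair (n + 1)).1 *
        uf b (SP U b (KK U (n + 1) ∪ (st U b v n).2 '' Set.Icc 1 n) ((1/2 : ℝ) ^ (n+1))).1 z ^ 2,
     Function.update (st U b v n).2 (n + 1)
        (SP U b (KK U (n + 1) ∪ (st U b v n).2 '' Set.Icc 1 n) ((1/2 : ℝ) ^ (n+1))).2)

variable (U : Set ℂ) (b : ℂ) (v : ℕ → ℂ)

def Fn (n : ℕ) : ℂ → ℂ := (st U b v n).1
def Sset (n : ℕ) : Set ℂ := KK U (n + 1) ∪ (st U b v n).2 '' Set.Icc 1 n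
def TT (n : ℕ) : ℝ := (SP U b (Sset U b v n) ((1/2 : ℝ) ^ (n+1))).1
def ZZ (n : ℕ) : ℂ := (SP U b (Sset U b v n) ((1/2 : ℝ) ^ (n+1))).2
def pts (n : ℕ) : ℂ := (st U b v n).2 n

lemma Fn_zero : Fn U b v 0 = fun _ => 0 := rfl

lemma Fn_succ (n : ℕ) : Fn U b v (n + 1) =
    fun z => Fn U b v n z * (1 - uf b (TT U b v n) z) ^ 2
      + v (Nat.unpair (n + 1)).1 * uf b (TT U b v n) z ^ 2 := rfl

lemma st_succ_snd (n : ℕ) :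
    (st U b v (n + 1)).2 = Function.update (st U b v n).2 (n + 1) (ZZ U b v n) := rfl

lemma st_snd_stab : ∀ m n : ℕ, n ≤ m → (st U b v m).2 n = (st U b v n).2 n := by
  intro m
  induction m with
  | zero =>
    intro n hn
    have : n = 0 := by omega
    rw [this]
  | succ m ih =>
    intro n hn
    rcases Nat.eq_or_lt_of_le hn with h | h
    · rw [h]
    · rw [st_succ_snd, Function.update_of_ne (by omega)]
      exact ih n (by omega)

section withHyps

variable {U : Set ℂ} {b : ℂ} {v : ℕ → ℂ}
variable (hbq : ∀ z ∈ U, 0 < (q b z).re) (hbcl : b ∈ closure U) (hb0 : b ≠ 0)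
  (hv : ∀ k, ‖v k‖ < 1)

include hbq hbcl hb0 hv

lemma mem_st : ∀ n j : ℕ, 1 ≤ j → j ≤ n → (st U b v n).2 j ∈ U := by
  intro n
  induction n with
  | zero => intro j h1 h2; omega
  | succ n ih =>
    have hcomp : IsCompact (Sset U b v n) :=
      (isCompact_KK U (n+1)).union (((Set.finite_Icc 1 n).image _).isCompact)
    have hsub : Sset U b v n ⊆ U := by
      apply Set.union_subset (KK_subset U (n+1))
      rintro x ⟨j, hj, rfl⟩
      exact ih j hj.1 hj.2
    have hspec := SP_spec (exists_SPprop hbq hbcl hb0 hcomp hsub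
      (by positivity : (0:ℝ) < (1/2 : ℝ) ^ (n+1)))
    intro j h1 h2
    rcases Nat.eq_or_lt_of_le h2 with h | h
    · rw [h, st_succ_snd, Function.update_self]
      exact hspec.2.2.1
    · rw [st_succ_snd, Function.update_of_ne (by omega)]
      exact ih j h1 (by omega)

lemma Sset_sub (n : ℕ) : Sset U b v n ⊆ U := by
  apply Set.union_subset (KK_subset U (n+1))
  rintro x ⟨j, hj, rfl⟩
  exact mem_st hbq hbcl hb0 hv n j hj.1 hj.2

lemma step_spec (n : ℕ) :
    SPprop U b (Sset U b v n) ((1/2 : ℝ) ^ (n+1)) (TT U b v n, ZZ U b v n) :=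
  SP_spec (exists_SPprop hbq hbcl hb0
    ((isCompact_KK U (n+1)).union (((Set.finite_Icc 1 n).image _).isCompact))
    (Sset_sub hbq hbcl hb0 hv n) (by positivity : (0:ℝ) < (1/2 : ℝ) ^ (n+1)))

lemma TT_nonneg (n : ℕ) : 0 ≤ TT U b v n := (step_spec hbq hbcl hb0 hv n).1

lemma uf_small (n : ℕ) {z : ℂ} (hz : z ∈ Sset U b v n) :
    ‖uf b (TT U b v n) z‖ ≤ (1/2 : ℝ) ^ (n+1) := (step_spec hbq hbcl hb0 hv n).2.1 z hz

lemma ZZ_mem (n : ℕ) : ZZ U b v n ∈ U := (step_spec hbq hbcl hb0 hv n).2.2.1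

lemma ZZ_close (n : ℕ) : ‖uf b (TT U b v n) (ZZ U b v n) - 1‖ ≤ (1/2 : ℝ) ^ (n+1) :=
  (step_spec hbq hbcl hb0 hv n).2.2.2

lemma Fn_bound : ∀ n, ∀ z ∈ U, ‖Fn U b v n z‖ ≤ 1 := by
  intro n
  induction n with
  | zero => intro z hz; rw [Fn_zero]; simp
  | succ n ih =>
    intro z hz
    rw [Fn_succ]
    exact combo_bound _ _ _ (ih z hz) (hv _).le
      (uf_sq_le_re b (TT_nonneg hbq hbcl hb0 hv n) (hbq z hz))

lemma Fn_diff : ∀ n, DifferentiableOn ℂ (Fn U b v n) U := by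
  intro n
  induction n with
  | zero => rw [Fn_zero]; exact differentiableOn_const 0
  | succ n ih =>
    rw [Fn_succ]
    have hu : DifferentiableOn ℂ (uf b (TT U b v n)) U :=
      uf_diffOn hbq (TT_nonneg hbq hbcl hb0 hv n)
    exact (ih.mul (((differentiableOn_const 1).sub hu).pow 2)).add
      ((differentiableOn_const _).mul (hu.pow 2))

lemma step_est (n : ℕ) {z : ℂ} (hz : z ∈ U) :
    ‖Fn U b v (n+1) z - Fn U b v n z‖ ≤ 4 * ‖uf b (TT U b v n) z‖ := by
  rw [Fn_succ]
  exact step_diff_bound _ _ _ (Fn_bound hbq hbcl hb0 hv n z hz) (hv _).le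
    (uf_norm_le_one' (TT_nonneg hbq hbcl hb0 hv n) (hbq z hz))

lemma tele {z : ℂ} (hz : z ∈ U) {N : ℕ} (hS : ∀ k, N ≤ k → z ∈ Sset U b v k)
    {n : ℕ} (hn : N ≤ n) : ∀ m, n ≤ m →
    ‖Fn U b v m z - Fn U b v n z‖ ≤ 4 * ((1/2 : ℝ) ^ n - (1/2 : ℝ) ^ m) := by
  intro m hm
  induction m, hm using Nat.le_induction with
  | base => simp
  | succ m hm ih =>
    have h1 : ‖Fn U b v (m+1) z - Fn U b v m z‖ ≤ 4 * ((1/2 : ℝ) ^ (m+1)) := by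
      refine le_trans (step_est hbq hbcl hb0 hv m hz) ?_
      have := uf_small hbq hbcl hb0 hv m (hS m (le_trans hn hm))
      linarith
    calc ‖Fn U b v (m+1) z - Fn U b v n z‖
        ≤ ‖Fn U b v (m+1) z - Fn U b v m z‖ + ‖Fn U b v m z - Fn U b v n z‖ := by
          have h2 : Fn U b v (m+1) z - Fn U b v n z
              = (Fn U b v (m+1) z - Fn U b v m z) + (Fn U b v m z - Fn U b v n z) := by ring
          rw [h2]; exact norm_add_le _ _
      _ ≤ 4 * ((1/2 : ℝ) ^ (m+1)) + 4 * ((1/2 : ℝ) ^ n - (1/2 : ℝ) ^ m) := by linarith [ih]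
      _ = 4 * ((1/2 : ℝ) ^ n - (1/2 : ℝ) ^ (m+1)) := by rw [pow_succ]; ring

end withHyps

set_option linter.unusedSectionVars false

section limits

variable {U : Set ℂ} {b : ℂ} {v : ℕ → ℂ}

open Classical in
def ff (U : Set ℂ) (b : ℂ) (v : ℕ → ℂ) (z : ℂ) : ℂ :=
  if h : ∃ l, Tendsto (fun n => Fn U b v n z) atTop (𝓝 l) then h.choose else 0

variable (hbq : ∀ z ∈ U, 0 < (q b z).re) (hbcl : b ∈ closure U) (hb0 : b ≠ 0)
  (hv : ∀ k, ‖v k‖ < 1)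

include hbq hbcl hb0 hv

lemma half_pow_le {k n : ℕ} (h : k ≤ n) : ((1:ℝ)/2) ^ n ≤ (1/2 : ℝ) ^ k :=
  pow_le_pow_of_le_one (by norm_num) (by norm_num) h

lemma ff_tendsto {z : ℂ} (hz : z ∈ U) {N : ℕ} (hS : ∀ k, N ≤ k → z ∈ Sset U b v k) :
    Tendsto (fun n => Fn U b v n z) atTop (𝓝 (ff U b v z)) := by
  have hcauchy : CauchySeq (fun n => Fn U b v n z) := by
    rw [Metric.cauchySeq_iff']
    intro ε hε
    obtain ⟨k, hk⟩ := exists_pow_lt_of_lt_one (show (0:ℝ) < ε / 4 by linarith)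
      (by norm_num : (1/2 : ℝ) < 1)
    refine ⟨max N k, ?_⟩
    intro n hn
    rw [dist_eq_norm]
    have h1 := tele hbq hbcl hb0 hv hz hS (le_max_left N k) n hn
    have h2 : ((1:ℝ)/2) ^ (max N k) ≤ (1/2 : ℝ) ^ k :=
      half_pow_le hbq hbcl hb0 hv (le_max_right N k)
    have h3 : (0:ℝ) < (1/2 : ℝ) ^ n := by positivity
    calc ‖Fn U b v n z - Fn U b v (max N k) z‖
        ≤ 4 * ((1/2 : ℝ) ^ (max N k) - (1/2 : ℝ) ^ n) := h1
      _ < 4 * ((1/2 : ℝ) ^ k) := by linarith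
      _ < ε := by linarith
  obtain ⟨l, hl⟩ := cauchySeq_tendsto_of_complete hcauchy
  have hex : ∃ l, Tendsto (fun n => Fn U b v n z) atTop (𝓝 l) := ⟨l, hl⟩
  rw [ff, dif_pos hex]
  exact hex.choose_spec

lemma ff_close {z : ℂ} (hz : z ∈ U) {N : ℕ} (hS : ∀ k, N ≤ k → z ∈ Sset U b v k)
    {n : ℕ} (hn : N ≤ n) : ‖ff U b v z - Fn U b v n z‖ ≤ 4 * (1/2 : ℝ) ^ n := by
  have ht := ff_tendsto hbq hbcl hb0 hv hz hS
  have ht2 : Tendsto (fun m => ‖Fn U b v m z - Fn U b v n z‖) atTop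
      (𝓝 ‖ff U b v z - Fn U b v n z‖) := ((ht.sub tendsto_const_nhds).norm)
  apply le_of_tendsto ht2
  filter_upwards [eventually_ge_atTop n] with m hm
  have h1 := tele hbq hbcl hb0 hv hz hS hn m hm
  have h3 : (0:ℝ) < (1/2 : ℝ) ^ m := by positivity
  linarith

lemma pts_mem_Sset {j k : ℕ} (h1 : 1 ≤ j) (hjk : j ≤ k) : pts U b v j ∈ Sset U b v k := by
  have : (st U b v k).2 j = pts U b v j := st_snd_stab U b v k j hjk
  exact Or.inr ⟨j, ⟨h1, hjk⟩, this⟩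

lemma pts_succ (n : ℕ) : pts U b v (n+1) = ZZ U b v n := by
  rw [pts, st_succ_snd, Function.update_self]

lemma pts_mem (n : ℕ) : pts U b v (n+1) ∈ U := by
  rw [pts_succ hbq hbcl hb0 hv]; exact ZZ_mem hbq hbcl hb0 hv n

lemma Fn_at_pts (n : ℕ) :
    ‖Fn U b v (n+1) (pts U b v (n+1)) - v (Nat.unpair (n+1)).1‖ ≤ 4 * (1/2 : ℝ) ^ (n+1) := by
  rw [Fn_succ, pts_succ hbq hbcl hb0 hv]
  refine le_trans (point_bound _ _ _ (Fn_bound hbq hbcl hb0 hv n _ (ZZ_mem hbq hbcl hb0 hv n))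
    (hv _).le (uf_norm_le_one' (TT_nonneg hbq hbcl hb0 hv n) (hbq _ (ZZ_mem hbq hbcl hb0 hv n)))) ?_
  have h := ZZ_close hbq hbcl hb0 hv n
  rw [norm_sub_rev] at h
  linarith

lemma ff_at_pts (n : ℕ) :
    ‖ff U b v (pts U b v (n+1)) - v (Nat.unpair (n+1)).1‖ ≤ 8 * (1/2 : ℝ) ^ (n+1) := by
  have hz : pts U b v (n+1) ∈ U := pts_mem hbq hbcl hb0 hv n
  have hS : ∀ k, n+1 ≤ k → pts U b v (n+1) ∈ Sset U b v k := fun k hk =>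
    pts_mem_Sset hbq hbcl hb0 hv (by omega) hk
  have h1 := ff_close hbq hbcl hb0 hv hz hS (le_refl (n+1))
  have h2 := Fn_at_pts hbq hbcl hb0 hv n
  calc ‖ff U b v (pts U b v (n+1)) - v (Nat.unpair (n+1)).1‖
      ≤ ‖ff U b v (pts U b v (n+1)) - Fn U b v (n+1) (pts U b v (n+1))‖
        + ‖Fn U b v (n+1) (pts U b v (n+1)) - v (Nat.unpair (n+1)).1‖ := by
        have h3 : ff U b v (pts U b v (n+1)) - v (Nat.unpair (n+1)).1
            = (ff U b v (pts U b v (n+1)) - Fn U b v (n+1) (pts U b v (n+1)))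
              + (Fn U b v (n+1) (pts U b v (n+1)) - v (Nat.unpair (n+1)).1) := by ring
        rw [h3]; exact norm_add_le _ _
    _ ≤ 8 * (1/2 : ℝ) ^ (n+1) := by linarith

lemma ff_bound {z : ℂ} (hz : z ∈ U) (hUo : IsOpen U) (hUc : Uᶜ.Nonempty) :
    ‖ff U b v z‖ ≤ 1 := by
  obtain ⟨N, _, hN2⟩ := exists_KK_nhds hUo hUc hz
  have hS : ∀ k, N ≤ k → z ∈ Sset U b v k := fun k hk =>
    Or.inl (hN2 (k+1) (by omega))
  have ht := ff_tendsto hbq hbcl hb0 hv hz hS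
  exact le_of_tendsto ht.norm (Eventually.of_forall fun n => Fn_bound hbq hbcl hb0 hv n z hz)

lemma ff_diff (hUo : IsOpen U) (hUc : Uᶜ.Nonempty) : DifferentiableOn ℂ (ff U b v) U := by
  have htlu : TendstoLocallyUniformlyOn (fun n => Fn U b v n) (ff U b v) atTop U := by
    rw [Metric.tendstoLocallyUniformlyOn_iff]
    intro ε hε x hx
    obtain ⟨N, hN1, hN2⟩ := exists_KK_nhds hUo hUc hx
    refine ⟨KK U N, mem_nhdsWithin_of_mem_nhds hN1, ?_⟩
    obtain ⟨k, hk⟩ := exists_pow_lt_of_lt_one (show (0:ℝ) < ε / 4 by linarith)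
      (by norm_num : (1/2 : ℝ) < 1)
    filter_upwards [eventually_ge_atTop (max N k)] with n hn y hy
    have hyU : y ∈ U := KK_subset U N hy
    have hSy : ∀ m, N ≤ m → y ∈ Sset U b v m := fun m hm =>
      Or.inl (KK_mono U (by omega) hy)
    have h1 := ff_close hbq hbcl hb0 hv hyU hSy (le_trans (le_max_left N k) hn)
    rw [dist_eq_norm]
    have h2 : ((1:ℝ)/2) ^ n ≤ (1/2 : ℝ) ^ k :=
      half_pow_le hbq hbcl hb0 hv (le_trans (le_max_right N k) hn)
    linarith
  exact htlu.differentiableOn (Eventually.of_forall (Fn_diff hbq hbcl hb0 hv)) hUo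

end limits

end DIBD
end

/-- Let `U` be a nonempty bounded connected open subset of `ℂ`. Then there exists a
holomorphic function `ρ : U → ℂ` with `ρ(U) ⊆ Δ = {z : |z| < 1}` whose image is dense
in the unit disk `Δ`. -/
theorem dense_image_in_disk_of_bounded_domain (U : Set ℂ)
    (hU_open : IsOpen U) (hU_conn : IsConnected U) (hU_bdd : Bornology.IsBounded U) :
    ∃ ρ : ℂ → ℂ, DifferentiableOn ℂ ρ U ∧ ρ '' U ⊆ Metric.ball (0 : ℂ) 1 ∧
      Metric.ball (0 : ℂ) 1 ⊆ closure (ρ '' U) := by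
  classical
  open Complex Metric Set Filter Topology in
  have hUne : U.Nonempty := hU_conn.nonempty
  have hclb : IsCompact (closure U) :=
    Metric.isCompact_of_isClosed_isBounded isClosed_closure hU_bdd.closure
  obtain ⟨b, hbcl, hbmax⟩ := hclb.exists_isMaxOn hUne.closure continuous_norm.continuousOn
  have hbmax' : ∀ z ∈ closure U, ‖z‖ ≤ ‖b‖ := fun z hz => hbmax hz
  obtain ⟨z₀, hz₀⟩ := hUne
  obtain ⟨ε₀, hε₀, hball⟩ := Metric.isOpen_iff.1 hU_open z₀ hz₀
  -- the maximizing point has positive norm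
  have hbpos : 0 < ‖b‖ := by
    by_cases h0 : z₀ = 0
    · have hw : ((ε₀/2 : ℝ) : ℂ) ∈ U := by
        apply hball
        rw [Metric.mem_ball, h0, dist_zero_right]
        rw [Complex.norm_real]
        rw [Real.norm_eq_abs, abs_of_pos (by linarith)]
        linarith
      have := hbmax' _ (subset_closure hw)
      have h2 : ‖((ε₀/2 : ℝ) : ℂ)‖ = ε₀/2 := by
        rw [Complex.norm_real, Real.norm_eq_abs, abs_of_pos (by linarith)]
      rw [h2] at this; linarith
    · have := hbmax' _ (subset_closure hz₀)
      have h2 : 0 < ‖z₀‖ := norm_pos_iff.2 h0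
      linarith
  have hb0 : b ≠ 0 := norm_pos_iff.1 hbpos
  -- b is not in U
  have hbU : b ∉ U := by
    intro hbU
    obtain ⟨δ, hδ, hball2⟩ := Metric.isOpen_iff.1 hU_open b hbU
    set r : ℝ := δ/2/‖b‖ with hr
    have hrpos : 0 < r := by positivity
    set c : ℂ := (1 + (r:ℂ)) * b with hc
    have hcb : c - b = (r:ℂ) * b := by rw [hc]; ring
    have hcU : c ∈ U := by
      apply hball2
      rw [Metric.mem_ball, dist_eq_norm, hcb, norm_mul, Complex.norm_real,
        Real.norm_eq_abs, abs_of_pos hrpos, hr]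
      rw [div_mul_cancel₀ _ (ne_of_gt hbpos)]
      linarith
    have hcnorm : ‖c‖ = (1 + r) * ‖b‖ := by
      rw [hc, norm_mul]
      congr 1
      have : (1 : ℂ) + (r:ℂ) = ((1 + r : ℝ) : ℂ) := by push_cast; ring
      rw [this, Complex.norm_real, Real.norm_eq_abs, abs_of_pos (by linarith)]
    have := hbmax' _ (subset_closure hcU)
    rw [hcnorm] at this
    nlinarith
  -- positivity of the real part of q on U
  have hbq : ∀ z ∈ U, 0 < (DIBD.q b z).re := by
    intro z hz
    have hzb : ‖z‖ ≤ ‖b‖ := hbmax' _ (subset_closure hz)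
    have hq_eq : (DIBD.q b z).re = Complex.normSq b - ((starRingEnd ℂ) b * z).re := by
      rw [DIBD.q, mul_sub, Complex.sub_re]
      congr 2
      rw [mul_comm, Complex.mul_conj, Complex.ofReal_re]
    have habs : ‖(starRingEnd ℂ) b * z‖ = ‖b‖ * ‖z‖ := by
      rw [norm_mul, RCLike.norm_conj]
    have h1 : ((starRingEnd ℂ) b * z).re ≤ ‖b‖ * ‖z‖ := by
      rw [← habs]
      exact le_trans (Complex.re_le_norm _) (le_of_eq rfl)
    have h2 : Complex.normSq b = ‖b‖ * ‖b‖ := by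
      rw [← Complex.sq_norm]
      ring
    rw [hq_eq]
    rcases lt_or_eq_of_le hzb with h | h
    · have : ((starRingEnd ℂ) b * z).re < ‖b‖ * ‖b‖ := by
        apply lt_of_le_of_lt h1
        exact mul_lt_mul_of_pos_left h hbpos
      linarith
    · -- ‖z‖ = ‖b‖ : equality case analysis
      by_contra hcon
      push_neg at hcon
      set wcz := (starRingEnd ℂ) b * z with hwcz
      have hre_ge : ‖b‖ * ‖b‖ ≤ wcz.re := by rw [← h2]; linarith
      have hre_le : wcz.re ≤ ‖b‖ * ‖b‖ := by rw [h] at h1; exact h1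
      have hre : wcz.re = ‖b‖ * ‖b‖ := le_antisymm hre_le hre_ge
      have habs2 : ‖wcz‖ = ‖b‖ * ‖b‖ := by rw [hwcz, habs, h]
      have him : wcz.im = 0 := by
        have hh : ‖wcz‖^2 = wcz.re^2 + wcz.im^2 := by
          rw [Complex.sq_norm, Complex.normSq_apply]; ring
        rw [habs2, hre] at hh
        nlinarith
      have hwb : wcz = (starRingEnd ℂ) b * b := by
        have hcb : (starRingEnd ℂ) b * b = (Complex.normSq b : ℂ) := by
          rw [mul_comm, Complex.mul_conj]
        rw [hcb]
        apply Complex.ext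
        · rw [hre, Complex.ofReal_re, h2]
        · rw [him, Complex.ofReal_im]
      have hzb2 : z = b := by
        have hconj : (starRingEnd ℂ) b ≠ 0 := by
          simpa using hb0
        exact mul_left_cancel₀ hconj hwb
      rw [hzb2] at hz
      exact hbU hz
  have hUc : Uᶜ.Nonempty := ⟨b, hbU⟩
  -- dense sequence in the unit ball
  haveI : Nonempty ↥(Metric.ball (0:ℂ) 1) := ⟨⟨0, by simp⟩⟩
  obtain ⟨vs, hvs⟩ := TopologicalSpace.exists_dense_seq ↥(Metric.ball (0:ℂ) 1)
  set v : ℕ → ℂ := fun n => (vs n : ℂ) with hvdef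
  have hv : ∀ k, ‖v k‖ < 1 := by
    intro k
    have := (vs k).2
    rwa [Metric.mem_ball, dist_zero_right] at this
  have hvd : ∀ w ∈ Metric.ball (0:ℂ) 1, ∀ ε > 0, ∃ k, dist w (v k) < ε := by
    intro w hw ε hε
    obtain ⟨k, hk⟩ := hvs.exists_dist_lt (⟨w, hw⟩ : ↥(Metric.ball (0:ℂ) 1)) hε
    exact ⟨k, by rwa [Subtype.dist_eq] at hk⟩
  set ρ := DIBD.ff U b v with hρ
  have hdiff : DifferentiableOn ℂ ρ U := DIBD.ff_diff hbq hbcl hb0 hv hU_open hUc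
  have hle : ∀ z ∈ U, ‖ρ z‖ ≤ 1 := fun z hz => DIBD.ff_bound hbq hbcl hb0 hv hz hU_open hUc
  -- approximate any v k within 8·(1/2)^(m+1)
  have key : ∀ k m : ℕ, ∃ z ∈ U, ‖ρ z - v k‖ ≤ 8 * (1/2 : ℝ)^(m+1) := by
    intro k m
    set j := Nat.pair k (m+1) with hjdef
    have hj : m+1 ≤ j := Nat.right_le_pair k (m+1)
    obtain ⟨n, hn⟩ : ∃ n, j = n+1 := ⟨j-1, by omega⟩
    have h := DIBD.ff_at_pts hbq hbcl hb0 hv n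
    rw [← hn] at h
    have hup : (Nat.unpair j).1 = k := by rw [hjdef, Nat.unpair_pair]
    rw [hup] at h
    refine ⟨DIBD.pts U b v j, ?_, ?_⟩
    · rw [hn]; exact DIBD.pts_mem hbq hbcl hb0 hv n
    · refine le_trans h ?_
      have h8 : ((1:ℝ)/2)^j ≤ (1/2 : ℝ)^(m+1) := DIBD.half_pow_le hbq hbcl hb0 hv hj
      linarith
  -- a point with small value
  have hlow : ∃ z ∈ U, ‖ρ z‖ ≤ 1/2 := by
    obtain ⟨k₀, hk₀⟩ := hvd 0 (by simp) (1/4) (by norm_num)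
    have hnk₀ : ‖v k₀‖ < 1/4 := by rwa [dist_comm, dist_zero_right] at hk₀
    obtain ⟨t, ht⟩ := exists_pow_lt_of_lt_one (show (0:ℝ) < 1/32 by norm_num)
      (by norm_num : (1/2 : ℝ) < 1)
    obtain ⟨z, hzU, hz⟩ := key k₀ t
    refine ⟨z, hzU, ?_⟩
    have h8 : ((1:ℝ)/2)^(t+1) ≤ (1/2 : ℝ)^t := DIBD.half_pow_le hbq hbcl hb0 hv (by omega)
    have : ‖ρ z‖ ≤ ‖ρ z - v k₀‖ + ‖v k₀‖ := by
      calc ‖ρ z‖ = ‖(ρ z - v k₀) + v k₀‖ := by ring_nf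
        _ ≤ ‖ρ z - v k₀‖ + ‖v k₀‖ := norm_add_le _ _
    nlinarith
  -- strict bound via maximum modulus principle
  have hstrict : ∀ z ∈ U, ‖ρ z‖ < 1 := by
    intro z hz
    rcases lt_or_eq_of_le (hle z hz) with h | h
    · exact h
    · exfalso
      have hmax2 : IsMaxOn (norm ∘ ρ) U z := fun y hy => by
        simp only [Function.comp_apply]
        exact (hle y hy).trans_eq h.symm
      have heq := Complex.eqOn_of_isPreconnected_of_isMaxOn_norm
        hU_conn.isPreconnected hU_open hdiff hz hmax2
      obtain ⟨z₁, hz₁U, hz₁⟩ := hlow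
      have : ρ z₁ = ρ z := heq hz₁U
      rw [this] at hz₁
      rw [← h] at hz₁
      linarith
  refine ⟨ρ, hdiff, ?_, ?_⟩
  · rintro w ⟨z, hz, rfl⟩
    exact mem_ball_zero_iff.2 (hstrict z hz)
  · intro w hw
    rw [Metric.mem_closure_iff]
    intro ε hε
    obtain ⟨k, hk⟩ := hvd w hw (ε/2) (by linarith)
    obtain ⟨t, ht⟩ := exists_pow_lt_of_lt_one (show (0:ℝ) < ε/16 by linarith)
      (by norm_num : (1/2 : ℝ) < 1)
    obtain ⟨z, hzU, hz⟩ := key k t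
    refine ⟨ρ z, ⟨z, hzU, rfl⟩, ?_⟩
    have h8 : ((1:ℝ)/2)^(t+1) ≤ (1/2 : ℝ)^t := DIBD.half_pow_le hbq hbcl hb0 hv (by omega)
    have hd2 : dist (v k) (ρ z) ≤ 8 * (1/2 : ℝ)^(t+1) := by
      rw [dist_comm, dist_eq_norm]
      exact hz
    calc dist w (ρ z) ≤ dist w (v k) + dist (v k) (ρ z) := dist_triangle _ _ _
      _ < ε/2 + ε/2 := by
          have : dist (v k) (ρ z) < ε/2 := by nlinarith
          linarith
      _ = ε := by ring
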